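/- If E, F ⊆ ℕ are both I₀ sets and E and F are separable by some rotation, then E ∪ F is an I₀ set. -/

import Mathlib

/-- A sequence `ψ : ℕ → ℂ` is almost periodic if it is a uniform limit of
trigonometric polynomials. -/
def AlmostPeriodic (ψ : ℕ → ℂ) : Prop :=
  ∀ ε : ℝ, 0 < ε → ∃ (m : ℕ) (c : Fin m → ℂ) (α : Fin m → ℝ),
    ∀ n : ℕ, ‖ψ n - ∑ j, c j * Complex.exp (2 * (Real.pi : ℂ) * Complex.I * (n : ℂ) * (α j : ℂ))‖ < ε

/-- A set `E ⊆ ℕ` is an `I₀` set if every bounded function on `E` extends to an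
almost periodic sequence on `ℕ`. -/
def IsI0Set (E : Set ℕ) : Prop :=
  ∀ b : ℕ → ℂ, (∃ C : ℝ, ∀ n ∈ E, ‖b n‖ ≤ C) →
    ∃ ψ : ℕ → ℂ, AlmostPeriodic ψ ∧ ∀ r ∈ E, ψ r = b r

/-- Two sets `A, B ⊆ ℕ` are separable by some rotation if there are `d ∈ ℕ` and
`α ∈ (ℝ/ℤ)^d` such that the closures of `Aα` and `Bα` in `(ℝ/ℤ)^d` are disjoint. -/
def SeparableByRotation (A B : Set ℕ) : Prop :=
  ∃ (d : ℕ) (α : Fin d → AddCircle (1 : ℝ)),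
    Disjoint (closure ((fun a : ℕ => a • α) '' A)) (closure ((fun b : ℕ => b • α) '' B))

namespace I0Aux

noncomputable section

open Complex Set

/-- The basic exponential sequence. -/
def ee (a : ℝ) (n : ℕ) : ℂ := Complex.exp (2 * (Real.pi : ℂ) * Complex.I * (n : ℂ) * (a : ℂ))

/-- Trigonometric polynomial sequences. -/
def IsTrigPoly (t : ℕ → ℂ) : Prop :=
  ∃ (m : ℕ) (c : Fin m → ℂ) (α : Fin m → ℝ), ∀ n : ℕ, t n = ∑ j, c j * ee (α j) n

lemma norm_ee (a : ℝ) (n : ℕ) : ‖ee a n‖ = 1 := by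
  have h : (2 * (Real.pi : ℂ) * Complex.I * (n : ℂ) * (a : ℂ))
      = ((2 * Real.pi * n * a : ℝ) : ℂ) * Complex.I := by push_cast; ring
  rw [ee, h, Complex.norm_exp_ofReal_mul_I]

lemma ee_add (a b : ℝ) (n : ℕ) : ee (a + b) n = ee a n * ee b n := by
  rw [ee, ee, ee, ← Complex.exp_add]
  congr 1
  push_cast
  ring

lemma ee_neg (a : ℝ) (n : ℕ) : ee (-a) n = (starRingEnd ℂ) (ee a n) := by
  rw [ee, ee, ← Complex.exp_conj]
  congr 1
  simp only [map_mul, Complex.conj_I, Complex.conj_ofReal, map_ofNat, map_natCast]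
  push_cast
  ring

lemma trig_const (z : ℂ) : IsTrigPoly (fun _ => z) := by
  refine ⟨1, fun _ => z, fun _ => 0, fun n => ?_⟩
  simp [ee]

lemma trig_add {t s : ℕ → ℂ} (ht : IsTrigPoly t) (hs : IsTrigPoly s) :
    IsTrigPoly (t + s) := by
  obtain ⟨m1, c1, a1, h1⟩ := ht
  obtain ⟨m2, c2, a2, h2⟩ := hs
  refine ⟨m1 + m2, Fin.append c1 c2, Fin.append a1 a2, fun n => ?_⟩
  rw [Fin.sum_univ_add]
  simp only [Fin.append_left, Fin.append_right]
  simp [h1 n, h2 n]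

lemma trig_mul {t s : ℕ → ℂ} (ht : IsTrigPoly t) (hs : IsTrigPoly s) :
    IsTrigPoly (t * s) := by
  obtain ⟨m1, c1, a1, h1⟩ := ht
  obtain ⟨m2, c2, a2, h2⟩ := hs
  refine ⟨m1 * m2,
    (fun p : Fin m1 × Fin m2 => c1 p.1 * c2 p.2) ∘ finProdFinEquiv.symm,
    (fun p : Fin m1 × Fin m2 => a1 p.1 + a2 p.2) ∘ finProdFinEquiv.symm, fun n => ?_⟩
  calc (t * s) n = ∑ p : Fin m1 × Fin m2, c1 p.1 * c2 p.2 * ee (a1 p.1 + a2 p.2) n := by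
        rw [Pi.mul_apply, h1 n, h2 n, Finset.sum_mul_sum, Fintype.sum_prod_type]
        refine Finset.sum_congr rfl fun i _ => Finset.sum_congr rfl fun j _ => ?_
        rw [ee_add]
        ring
    _ = ∑ j : Fin (m1 * m2),
        ((fun p : Fin m1 × Fin m2 => c1 p.1 * c2 p.2) ∘ finProdFinEquiv.symm) j *
          ee (((fun p : Fin m1 × Fin m2 => a1 p.1 + a2 p.2) ∘ finProdFinEquiv.symm) j) n :=
      Fintype.sum_equiv finProdFinEquiv _ _ (fun p => by simp)

lemma trig_neg {t : ℕ → ℂ} (ht : IsTrigPoly t) : IsTrigPoly (-t) := by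
  obtain ⟨m, c, a, h⟩ := ht
  refine ⟨m, fun j => -c j, a, fun n => ?_⟩
  simp [h n, Finset.sum_neg_distrib]

lemma trig_conj {t : ℕ → ℂ} (ht : IsTrigPoly t) :
    IsTrigPoly (fun n => (starRingEnd ℂ) (t n)) := by
  obtain ⟨m, c, a, h⟩ := ht
  refine ⟨m, fun j => (starRingEnd ℂ) (c j), fun j => -(a j), fun n => ?_⟩
  simp only
  rw [h n, map_sum]
  exact Finset.sum_congr rfl fun j _ => by rw [map_mul, ee_neg]

lemma trig_bounded {t : ℕ → ℂ} (ht : IsTrigPoly t) : ∃ C : ℝ, ∀ n, ‖t n‖ ≤ C := by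
  obtain ⟨m, c, a, h⟩ := ht
  refine ⟨∑ j, ‖c j‖, fun n => ?_⟩
  rw [h n]
  calc ‖∑ j, c j * ee (a j) n‖ ≤ ∑ j, ‖c j * ee (a j) n‖ := norm_sum_le _ _
    _ = ∑ j, ‖c j‖ := by
        refine Finset.sum_congr rfl fun j _ => ?_
        rw [norm_mul, norm_ee, mul_one]

lemma ap_iff {ψ : ℕ → ℂ} :
    AlmostPeriodic ψ ↔ ∀ ε : ℝ, 0 < ε → ∃ t, IsTrigPoly t ∧ ∀ n, ‖ψ n - t n‖ < ε := by
  constructor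
  · intro h ε hε
    obtain ⟨m, c, a, hm⟩ := h ε hε
    exact ⟨fun n => ∑ j, c j * ee (a j) n, ⟨m, c, a, fun _ => rfl⟩, hm⟩
  · intro h ε hε
    obtain ⟨t, ⟨m, c, a, ht⟩, hb⟩ := h ε hε
    exact ⟨m, c, a, fun n => by rw [show (∑ j, c j * Complex.exp (2 * (Real.pi : ℂ) *
      Complex.I * (n : ℂ) * (a j : ℂ))) = t n from (ht n).symm]; exact hb n⟩

lemma trig_ap {t : ℕ → ℂ} (ht : IsTrigPoly t) : AlmostPeriodic t := by
  rw [ap_iff]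
  intro ε hε
  exact ⟨t, ht, fun n => by simpa using hε⟩

lemma ap_add {ψ φ : ℕ → ℂ} (hψ : AlmostPeriodic ψ) (hφ : AlmostPeriodic φ) :
    AlmostPeriodic (ψ + φ) := by
  rw [ap_iff] at *
  intro ε hε
  obtain ⟨t, ht, hbt⟩ := hψ (ε / 2) (by linarith)
  obtain ⟨s, hs, hbs⟩ := hφ (ε / 2) (by linarith)
  refine ⟨t + s, trig_add ht hs, fun n => ?_⟩
  have : ψ n + φ n - (t n + s n) = (ψ n - t n) + (φ n - s n) := by ring
  calc ‖(ψ + φ) n - (t + s) n‖ = ‖(ψ n - t n) + (φ n - s n)‖ := by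
        simp only [Pi.add_apply]; rw [this]
    _ ≤ ‖ψ n - t n‖ + ‖φ n - s n‖ := norm_add_le _ _
    _ < ε / 2 + ε / 2 := add_lt_add (hbt n) (hbs n)
    _ = ε := by ring

lemma ap_neg {ψ : ℕ → ℂ} (hψ : AlmostPeriodic ψ) : AlmostPeriodic (-ψ) := by
  rw [ap_iff] at *
  intro ε hε
  obtain ⟨t, ht, hbt⟩ := hψ ε hε
  refine ⟨-t, trig_neg ht, fun n => ?_⟩
  have h : (-ψ) n - (-t) n = -(ψ n - t n) := by simp only [Pi.neg_apply]; ring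
  rw [h, norm_neg]
  exact hbt n

lemma ap_bounded {ψ : ℕ → ℂ} (hψ : AlmostPeriodic ψ) : ∃ C : ℝ, 0 ≤ C ∧ ∀ n, ‖ψ n‖ ≤ C := by
  rw [ap_iff] at hψ
  obtain ⟨t, ht, hbt⟩ := hψ 1 one_pos
  obtain ⟨B, hB⟩ := trig_bounded ht
  have hB0 : 0 ≤ B := le_trans (norm_nonneg (t 0)) (hB 0)
  refine ⟨B + 1, by linarith, fun n => ?_⟩
  have h3 : ‖ψ n‖ - ‖t n‖ ≤ ‖ψ n - t n‖ := norm_sub_norm_le _ _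
  have := hbt n
  have := hB n
  linarith

lemma ap_mul {ψ φ : ℕ → ℂ} (hψ : AlmostPeriodic ψ) (hφ : AlmostPeriodic φ) :
    AlmostPeriodic (ψ * φ) := by
  obtain ⟨B1, hB1n, hB1⟩ := ap_bounded hψ
  obtain ⟨B2, hB2n, hB2⟩ := ap_bounded hφ
  rw [ap_iff] at *
  intro ε hε
  set δ := min 1 (ε / (B1 + B2 + 2)) with hδdef
  have hδ : 0 < δ := lt_min one_pos (div_pos hε (by linarith))
  have hδ1 : δ ≤ 1 := min_le_left _ _
  have hδ2 : δ * (B1 + B2 + 2) ≤ ε := by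
    have h := min_le_right 1 (ε / (B1 + B2 + 2))
    rw [← hδdef] at h
    calc δ * (B1 + B2 + 2) ≤ (ε / (B1 + B2 + 2)) * (B1 + B2 + 2) := by
          apply mul_le_mul_of_nonneg_right h; linarith
      _ = ε := by field_simp
  obtain ⟨t, ht, hbt⟩ := hψ δ hδ
  obtain ⟨s, hs, hbs⟩ := hφ δ hδ
  refine ⟨t * s, trig_mul ht hs, fun n => ?_⟩
  have htb : ‖t n‖ ≤ B1 + δ := by
    have h3 : ‖t n‖ - ‖ψ n‖ ≤ ‖t n - ψ n‖ := norm_sub_norm_le _ _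
    rw [norm_sub_rev] at h3
    have := hbt n
    have := hB1 n
    linarith
  have key : ‖ψ n * φ n - t n * s n‖ ≤ ‖ψ n - t n‖ * ‖φ n‖ + ‖t n‖ * ‖φ n - s n‖ := by
    calc ‖ψ n * φ n - t n * s n‖ = ‖(ψ n - t n) * φ n + t n * (φ n - s n)‖ := by ring_nf
      _ ≤ ‖(ψ n - t n) * φ n‖ + ‖t n * (φ n - s n)‖ := norm_add_le _ _
      _ = ‖ψ n - t n‖ * ‖φ n‖ + ‖t n‖ * ‖φ n - s n‖ := by rw [norm_mul, norm_mul]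
  have h1 : ‖ψ n - t n‖ * ‖φ n‖ ≤ δ * B2 :=
    mul_le_mul (le_of_lt (hbt n)) (hB2 n) (norm_nonneg _) (le_of_lt hδ)
  have h2 : ‖t n‖ * ‖φ n - s n‖ ≤ (B1 + δ) * δ :=
    mul_le_mul htb (le_of_lt (hbs n)) (norm_nonneg _) (by linarith)
  have hδsq : δ * δ ≤ δ := by nlinarith
  have hfin : δ * B2 + (B1 + δ) * δ < ε := by nlinarith
  calc ‖(ψ * φ) n - (t * s) n‖ = ‖ψ n * φ n - t n * s n‖ := rfl
    _ ≤ ‖ψ n - t n‖ * ‖φ n‖ + ‖t n‖ * ‖φ n - s n‖ := key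
    _ ≤ δ * B2 + (B1 + δ) * δ := add_le_add h1 h2
    _ < ε := hfin

lemma ap_sub {ψ φ : ℕ → ℂ} (hψ : AlmostPeriodic ψ) (hφ : AlmostPeriodic φ) :
    AlmostPeriodic (ψ - φ) := by
  have := ap_add hψ (ap_neg hφ)
  simpa [sub_eq_add_neg] using this

lemma exists_separating_ap (E F : Set ℕ) (hEF : SeparableByRotation E F) :
    ∃ χ : ℕ → ℂ, AlmostPeriodic χ ∧ (∀ r ∈ E, χ r = 1) ∧ (∀ r ∈ F, χ r = 0) := by
  obtain ⟨d, α, hdis⟩ := hEF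
  haveI : Fact (0 < (1 : ℝ)) := ⟨one_pos⟩
  -- Urysohn separation on the torus
  obtain ⟨f, hf0, hf1, -⟩ := exists_continuous_zero_one_of_isClosed
    (isClosed_closure (s := (fun b : ℕ => b • α) '' F))
    (isClosed_closure (s := (fun a : ℕ => a • α) '' E)) hdis.symm
  let X := Fin d → AddCircle (1 : ℝ)
  let g : C(X, ℂ) := ⟨fun x => ((f x : ℝ) : ℂ), Complex.continuous_ofReal.comp f.continuous⟩
  -- the star subalgebra generated by coordinate characters
  let gens : Set C(X, ℂ) :=
    Set.range fun j : Fin d => (fourier 1).comp ⟨fun x => x j, continuous_apply j⟩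
  let A : StarSubalgebra ℂ C(X, ℂ) := StarAlgebra.adjoin ℂ gens
  have hsep : A.SeparatesPoints := by
    intro x y hxy
    have hj : ∃ j, x j ≠ y j := by
      by_contra hc
      push_neg at hc
      exact hxy (funext hc)
    obtain ⟨j, hj⟩ := hj
    refine ⟨_, ⟨(fourier 1).comp ⟨fun x : X => x j, continuous_apply j⟩,
      StarAlgebra.subset_adjoin ℂ gens ⟨j, rfl⟩, rfl⟩, ?_⟩
    simp only [ContinuousMap.comp_apply, ContinuousMap.coe_mk]
    rw [fourier_one, fourier_one]
    intro hc
    replace hc := Circle.ext hc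
    exact hj (AddCircle.injective_toCircle one_ne_zero hc)
  have hdense : A.topologicalClosure = ⊤ :=
    ContinuousMap.starSubalgebra_topologicalClosure_eq_top_of_separatesPoints A hsep
  -- every element of A pulls back to a trig polynomial along n ↦ n • α
  have hpull : ∀ h ∈ A, IsTrigPoly (fun n : ℕ => h (n • α)) := by
    intro h hh
    induction hh using StarAlgebra.adjoin_induction with
    | mem x hx =>
        obtain ⟨j, rfl⟩ := hx
        obtain ⟨a, ha⟩ : ∃ a : ℝ, (a : AddCircle (1 : ℝ)) = α j :=
          Quotient.exists_rep (α j)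
        refine ⟨1, fun _ => 1, fun _ => a, fun n => ?_⟩
        have h1 : (n • α) j = ((n • a : ℝ) : AddCircle (1 : ℝ)) := by
          rw [Pi.smul_apply, ← ha, ← QuotientAddGroup.mk_nsmul]
        simp only [ContinuousMap.comp_apply, ContinuousMap.coe_mk, h1]
        rw [fourier_coe_apply]
        rw [Finset.sum_const, Finset.card_univ, Fintype.card_fin, one_smul, one_mul]
        rw [ee]
        congr 1
        push_cast
        ring
    | algebraMap r =>
        refine (trig_const r).imp fun m hm => ?_
        have : (fun n : ℕ => (algebraMap ℂ C(X, ℂ) r) (n • α)) = fun _ : ℕ => r := by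
          funext n
          simp
        rw [this]
        exact hm
    | add x y hx hy ihx ihy =>
        convert trig_add ihx ihy using 1
        rfl
    | mul x y hx hy ihx ihy =>
        convert trig_mul ihx ihy using 1
        rfl
    | star x hx ihx =>
        convert trig_conj ihx using 1
        rfl
  -- the separating almost periodic sequence
  refine ⟨fun n => g (n • α), ?_, ?_, ?_⟩
  · rw [ap_iff]
    intro ε hε
    have hg : (g : C(X, ℂ)) ∈ closure (A : Set C(X, ℂ)) := by
      rw [← StarSubalgebra.topologicalClosure_coe, hdense]
      trivial
    obtain ⟨h, hhA, hdist⟩ := Metric.mem_closure_iff.mp hg ε hε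
    refine ⟨fun n => h (n • α), hpull h hhA, fun n => ?_⟩
    calc ‖g (n • α) - h (n • α)‖ = dist (g (n • α)) (h (n • α)) := (dist_eq_norm _ _).symm
      _ ≤ dist g h := ContinuousMap.dist_apply_le_dist _
      _ < ε := hdist
  · intro r hr
    have : (r • α) ∈ closure ((fun a : ℕ => a • α) '' E) :=
      subset_closure (Set.mem_image_of_mem _ hr)
    have h1 := hf1 this
    simp only [Pi.one_apply] at h1
    show ((f (r • α) : ℝ) : ℂ) = 1
    rw [h1]; norm_num
  · intro r hr
    have : (r • α) ∈ closure ((fun b : ℕ => b • α) '' F) :=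
      subset_closure (Set.mem_image_of_mem _ hr)
    have h0 := hf0 this
    simp only [Pi.zero_apply] at h0
    show ((f (r • α) : ℝ) : ℂ) = 0
    rw [h0]; norm_num

end

end I0Aux

/-- If `E` and `F` are `I₀` and separable by some rotation, then `E ∪ F` is `I₀`. -/
theorem I0_union_of_separable (E F : Set ℕ)
    (hE : IsI0Set E) (hF : IsI0Set F) (hEF : SeparableByRotation E F) :
    IsI0Set (E ∪ F) := by
  intro b hb
  obtain ⟨C, hC⟩ := hb
  obtain ⟨ψE, hψE, hψEb⟩ := hE b ⟨C, fun n hn => hC n (Or.inl hn)⟩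
  obtain ⟨ψF, hψF, hψFb⟩ := hF b ⟨C, fun n hn => hC n (Or.inr hn)⟩
  obtain ⟨χ, hχ, hχE, hχF⟩ := I0Aux.exists_separating_ap E F hEF
  refine ⟨ψF + χ * (ψE - ψF), ?_, ?_⟩
  · exact I0Aux.ap_add hψF (I0Aux.ap_mul hχ (I0Aux.ap_sub hψE hψF))
  · rintro r (hr | hr)
    · simp only [Pi.add_apply, Pi.mul_apply, Pi.sub_apply, hχE r hr, hψEb r hr]
      ring
    · simp only [Pi.add_apply, Pi.mul_apply, Pi.sub_apply, hχF r hr, hψFb r hr]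
      ring
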